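/- Fix β > 0. There is a constant C such that for every integer n > 1 and every continuous function f : ℝ → ℂ with f(x) → 0 as |x| → ∞, sup_{x∈ℝ} |R_nf(x)| ≤ C (log n) sup_{x∈ℝ} |f(x)|. That is, the interpolation operator R_n has operator norm at most C log n from C⁰₀(ℝ) to C⁰₀(ℝ). -/

import Mathlib

/-- The Möbius map `M_β(x) = (x - iβ)/(x + iβ)` for real `x`. -/
noncomputable def Mob (β : ℝ) (x : ℝ) : ℂ :=
  ((x : ℂ) - Complex.I * β) / ((x : ℂ) + Complex.I * β)

/-- The change of variables `T(θ) = -β cot(θ/2)` mapping `(0, 2π)` onto `ℝ`. -/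
noncomputable def Tmap (β : ℝ) (θ : ℝ) : ℝ :=
  -β * (Real.cos (θ / 2) / Real.sin (θ / 2))

/-- Discrete Fourier coefficients `F̃_k = (1/n) ∑_{ℓ=0}^{n-1} e^{-ikθ_ℓ} F(θ_ℓ)`. -/
noncomputable def dftCoeff (n : ℕ) (F : ℝ → ℂ) (k : ℤ) : ℂ :=
  (n : ℂ)⁻¹ * ∑ ℓ ∈ Finset.range n,
    Complex.exp (-Complex.I * (k : ℂ) * ((2 * Real.pi * ℓ / n : ℝ) : ℂ)) *
      F (2 * Real.pi * ℓ / n)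

/-- The rational interpolant `R_n f(x) = ∑_{k=-n₋}^{n₊} F̃_k (M_β(x)^k − 1)`. -/
noncomputable def ratInterp (β : ℝ) (n : ℕ) (F : ℝ → ℂ) (x : ℝ) : ℂ :=
  ∑ k ∈ Finset.Icc (-(((n - 1) / 2 : ℕ) : ℤ)) ((n / 2 : ℕ) : ℤ),
    dftCoeff n F k * (Mob β x ^ k - 1)

/-- `‖e^{iψ} - 1‖ = 2|sin(ψ/2)|`. -/
lemma norm_exp_mul_I_sub_one (ψ : ℝ) :
    ‖Complex.exp ((ψ : ℂ) * Complex.I) - 1‖ = 2 * |Real.sin (ψ / 2)| := by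
  have hre : (Complex.exp ((ψ : ℂ) * Complex.I) - 1).re = Real.cos ψ - 1 := by
    simp [Complex.exp_ofReal_mul_I_re]
  have him : (Complex.exp ((ψ : ℂ) * Complex.I) - 1).im = Real.sin ψ := by
    simp [Complex.exp_ofReal_mul_I_im]
  rw [Complex.norm_def, Complex.normSq_apply, hre, him]
  have h2 : (Real.cos ψ - 1) ^ 2 + Real.sin ψ ^ 2 = (2 * |Real.sin (ψ / 2)|) ^ 2 := by
    have hs := Real.sin_sq_eq_half_sub (ψ / 2)
    rw [show 2 * (ψ / 2) = ψ by ring] at hs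
    have habs : |Real.sin (ψ / 2)| ^ 2 = Real.sin (ψ / 2) ^ 2 := sq_abs _
    have hpy := Real.sin_sq_add_cos_sq ψ
    nlinarith [hs, habs, hpy]
  calc Real.sqrt ((Real.cos ψ - 1) * (Real.cos ψ - 1) + Real.sin ψ * Real.sin ψ)
      = Real.sqrt ((2 * |Real.sin (ψ / 2)|) ^ 2) := by rw [← h2]; ring_nf
    _ = 2 * |Real.sin (ψ / 2)| := Real.sqrt_sq (by positivity)

/-- The shifted Dirichlet kernel. -/
noncomputable def Hker (n : ℕ) (ψ : ℝ) : ℂ :=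
  ∑ k ∈ Finset.Icc (-(((n - 1) / 2 : ℕ) : ℤ)) ((n / 2 : ℕ) : ℤ),
    Complex.exp (Complex.I * (k : ℂ) * (ψ : ℂ))

lemma hker_eq (n : ℕ) (hn : 1 ≤ n) (ψ : ℝ) :
    Hker n ψ = Complex.exp (-(Complex.I * (((n - 1) / 2 : ℕ) : ℂ) * (ψ : ℂ))) *
      ∑ j ∈ Finset.range n, Complex.exp ((ψ : ℂ) * Complex.I) ^ j := by
  set a : ℕ := (n - 1) / 2 with ha
  have hcard : a + n / 2 + 1 = n := by omega
  rw [Hker, Finset.mul_sum]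
  refine Finset.sum_nbij' (fun k => (k + (a : ℤ)).toNat) (fun j => (j : ℤ) - (a : ℤ))
    ?_ ?_ ?_ ?_ ?_
  · intro k hk
    simp only [Finset.mem_Icc] at hk
    simp only [Finset.mem_range]
    omega
  · intro j hj
    simp only [Finset.mem_range] at hj
    simp only [Finset.mem_Icc]
    omega
  · intro k hk
    simp only [Finset.mem_Icc] at hk
    omega
  · intro j hj
    simp only [Finset.mem_range] at hj
    omega
  · intro k hk
    simp only [Finset.mem_Icc] at hk
    rw [← Complex.exp_nat_mul, ← Complex.exp_add]
    congr 1
    have : ((k + (a : ℤ)).toNat : ℂ) = (k : ℂ) + (a : ℂ) := by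
      have : ((k + (a : ℤ)).toNat : ℤ) = k + a := by omega
      exact_mod_cast congrArg (Int.cast : ℤ → ℂ) this
    rw [this]
    ring

lemma norm_hker (n : ℕ) (hn : 1 ≤ n) (ψ : ℝ) :
    ‖Hker n ψ‖ = ‖∑ j ∈ Finset.range n, Complex.exp ((ψ : ℂ) * Complex.I) ^ j‖ := by
  rw [hker_eq n hn ψ, norm_mul]
  have : ‖Complex.exp (-(Complex.I * (((n - 1) / 2 : ℕ) : ℂ) * (ψ : ℂ)))‖ = 1 := by
    rw [Complex.norm_exp]
    simp [Complex.exp_re]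
  rw [this, one_mul]

lemma hker_theta_zero (n : ℕ) (hn : 1 ≤ n) (ℓ : ℕ) (h0 : 0 < ℓ) (hℓ : ℓ < n) :
    Hker n (-(2 * Real.pi * ℓ / n)) = 0 := by
  rw [hker_eq n hn]
  have hw : Complex.exp (((-(2 * Real.pi * ℓ / n) : ℝ) : ℂ) * Complex.I) ≠ 1 := by
    rw [Ne, Complex.exp_eq_one_iff]
    rintro ⟨m, hm⟩
    have hm' : ((-(2 * Real.pi * ℓ / n) : ℝ) : ℂ) * Complex.I
        = ((m : ℂ) * (2 * Real.pi)) * Complex.I := by rw [hm]; ring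
    have hI : ((-(2 * Real.pi * ℓ / n) : ℝ) : ℂ) = (m : ℂ) * (2 * Real.pi) :=
      mul_right_cancel₀ Complex.I_ne_zero hm'
    have hre : (-(2 * Real.pi * ℓ / n) : ℝ) = (m : ℝ) * (2 * Real.pi) := by
      exact_mod_cast hI
    have hπ := Real.pi_pos
    have hn' : (0 : ℝ) < n := by exact_mod_cast (by omega : 0 < n)
    have hq : (ℓ : ℝ) / n = -(m : ℝ) := by
      field_simp at hre ⊢
      nlinarith [hre]
    have h1 : (0 : ℝ) < (ℓ : ℝ) / n := by positivity
    have h2 : (ℓ : ℝ) / n < 1 := by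
      rw [div_lt_one hn']
      exact_mod_cast hℓ
    rw [hq] at h1 h2
    have : (0 : ℝ) < -(m:ℝ) := h1
    have hm1 : m < 0 := by exact_mod_cast neg_pos.mp this
    have hm2 : (-1 : ℝ) < m := by linarith
    have : (-1 : ℤ) < m := by exact_mod_cast hm2
    omega
  have hwn : Complex.exp (((-(2 * Real.pi * ℓ / n) : ℝ) : ℂ) * Complex.I) ^ n = 1 := by
    rw [← Complex.exp_nat_mul]
    have hn0 : (n : ℂ) ≠ 0 := by exact_mod_cast Nat.cast_ne_zero.mpr (by omega)
    have : (n : ℂ) * (((-(2 * Real.pi * ℓ / n) : ℝ) : ℂ) * Complex.I)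
        = (-(ℓ : ℤ) : ℂ) * (2 * Real.pi * Complex.I) := by
      push_cast
      field_simp
    rw [this]
    have h := Complex.exp_int_mul_two_pi_mul_I (-(ℓ : ℤ))
    convert h using 2
    push_cast
    ring
  rw [geom_sum_eq hw, hwn, sub_self, zero_div, mul_zero]

lemma mob_abs (β : ℝ) (hβ : 0 < β) (x : ℝ) : ‖Mob β x‖ = 1 := by
  have hden : ((x : ℂ) + Complex.I * β) ≠ 0 := by
    intro h
    have := congrArg Complex.im h
    simp at this
    linarith
  have h1 : ‖(x : ℂ) - Complex.I * β‖ = ‖(x : ℂ) + Complex.I * β‖ := by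
    rw [Complex.norm_def, Complex.norm_def]
    congr 1
    simp [Complex.normSq_apply]
  rw [Mob, norm_div, h1, div_self]
  exact norm_ne_zero_iff.mpr hden

lemma ratInterp_eq (β : ℝ) (hβ : 0 < β) (n : ℕ) (F : ℝ → ℂ) (x : ℝ) :
    ratInterp β n F x = (n : ℂ)⁻¹ * ∑ ℓ ∈ Finset.range n,
      F (2 * Real.pi * ℓ / n) *
        (Hker n ((Mob β x).arg - 2 * Real.pi * ℓ / n) - Hker n (-(2 * Real.pi * ℓ / n))) := by
  set t := (Mob β x).arg with ht
  have hMob : Mob β x = Complex.exp ((t : ℂ) * Complex.I) := by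
    conv_lhs => rw [← Complex.norm_mul_exp_arg_mul_I (Mob β x)]
    rw [mob_abs β hβ x]
    simp
    rfl
  have hpow : ∀ k : ℤ, Mob β x ^ k = Complex.exp (Complex.I * (k : ℂ) * (t : ℂ)) := by
    intro k
    rw [hMob, ← Complex.exp_int_mul]
    congr 1
    ring
  rw [ratInterp]
  simp only [dftCoeff, mul_assoc]
  rw [← Finset.mul_sum]
  congr 1
  simp only [Finset.sum_mul]
  rw [Finset.sum_comm]
  refine Finset.sum_congr rfl fun ℓ hℓ => ?_
  rw [Hker, Hker, ← Finset.sum_sub_distrib, Finset.mul_sum]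
  refine Finset.sum_congr rfl fun k hk => ?_
  rw [hpow k]
  set θ : ℝ := 2 * (Real.pi * (ℓ : ℝ)) / (n : ℝ) with hθ
  have a1 : Complex.exp (Complex.I * (k : ℂ) * ((t - θ : ℝ) : ℂ))
      = Complex.exp (-Complex.I * ((k : ℂ) * (θ : ℂ))) *
        Complex.exp (Complex.I * (k : ℂ) * (t : ℂ)) := by
    rw [← Complex.exp_add]
    congr 1
    push_cast
    ring
  have a2 : Complex.exp (Complex.I * (k : ℂ) * ((-θ : ℝ) : ℂ))
      = Complex.exp (-Complex.I * ((k : ℂ) * (θ : ℂ))) := by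
    congr 1
    push_cast
    ring
  rw [a1, a2]
  ring
lemma emod_inv_aux (K : ℤ) (n : ℕ) (ℓ : ℕ) (hℓ : ℓ < n) :
    (K - (K - ℓ) % n) % n = ℓ := by
  rw [Int.sub_emod K ((K - ℓ) % n), Int.emod_emod_of_dvd _ dvd_rfl, ← Int.sub_emod,
    sub_sub_cancel]
  exact Int.emod_eq_of_lt (by omega) (by exact_mod_cast hℓ)

lemma sin_lower (n : ℕ) (hn : 2 ≤ n) (s : ℝ) (hs0 : 0 ≤ s) (hs1 : s < Real.pi / n)
    (r : ℕ) (hr : r < n) :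
    (2 / n) * ((min r (n - 1 - r) : ℕ) : ℝ) ≤ Real.sin (s + r * Real.pi / n) := by
  have hπ := Real.pi_pos
  have hn0 : (0 : ℝ) < n := by positivity
  set y : ℝ := s + r * Real.pi / n with hy
  have hy0 : 0 ≤ y := by positivity
  have hrn : (r : ℝ) ≤ (n : ℝ) - 1 := by
    have : (r : ℝ) + 1 ≤ n := by exact_mod_cast hr
    linarith
  have hyπ : y ≤ Real.pi := by
    have h1 : (r : ℝ) * Real.pi / n ≤ ((n : ℝ) - 1) * Real.pi / n := by
      gcongr
    have h2 : ((n : ℝ) - 1) * Real.pi / n + Real.pi / n = Real.pi := by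
      field_simp
      ring
    simp only [hy]
    linarith [hs1]
  have hmr : ((min r (n - 1 - r) : ℕ) : ℝ) ≤ (r : ℝ) := by exact_mod_cast Nat.min_le_left _ _
  have hmr2 : ((min r (n - 1 - r) : ℕ) : ℝ) ≤ (n : ℝ) - 1 - r := by
    have h1 : (min r (n - 1 - r) : ℕ) ≤ n - 1 - r := Nat.min_le_right _ _
    have h3 : n - 1 - r = n - (1 + r) := by omega
    have h2 : ((n - 1 - r : ℕ) : ℝ) = (n : ℝ) - 1 - r := by
      rw [h3, Nat.cast_sub (by omega)]
      push_cast
      ring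
    calc ((min r (n - 1 - r) : ℕ) : ℝ) ≤ ((n - 1 - r : ℕ) : ℝ) := by exact_mod_cast h1
      _ = (n : ℝ) - 1 - r := h2
  by_cases hc : y ≤ Real.pi / 2
  · have hj := Real.mul_le_sin hy0 hc
    have hylb : (r : ℝ) * Real.pi / n ≤ y := by
      simp only [hy]
      linarith
    have : (2 / n) * ((min r (n - 1 - r) : ℕ) : ℝ) ≤ 2 / Real.pi * y := by
      have e1 : 2 / Real.pi * ((r : ℝ) * Real.pi / n) = 2 / n * r := by field_simp
      have e2 : 2 / Real.pi * ((r : ℝ) * Real.pi / n) ≤ 2 / Real.pi * y := by gcongr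
      rw [e1] at e2
      have : (2 / n) * ((min r (n - 1 - r) : ℕ) : ℝ) ≤ 2 / n * r := by gcongr
      linarith
    linarith
  · push_neg at hc
    have h0 : 0 ≤ Real.pi - y := by linarith
    have h1 : Real.pi - y ≤ Real.pi / 2 := by linarith
    have hj := Real.mul_le_sin h0 h1
    rw [Real.sin_pi_sub] at hj
    have hylb : ((n : ℝ) - 1 - r) * Real.pi / n ≤ Real.pi - y := by
      have hsn : s ≤ Real.pi / n := hs1.le
      have expand : Real.pi - y = Real.pi - s - (r : ℝ) * Real.pi / n := by rw [hy]; ring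
      rw [expand]
      have : ((n : ℝ) - 1 - r) * Real.pi / n = Real.pi - Real.pi / n - (r : ℝ) * Real.pi / n := by
        field_simp
      rw [this]
      linarith
    have : (2 / n) * ((min r (n - 1 - r) : ℕ) : ℝ) ≤ 2 / Real.pi * (Real.pi - y) := by
      have e1 : 2 / Real.pi * (((n : ℝ) - 1 - r) * Real.pi / n) = 2 / n * ((n : ℝ) - 1 - r) := by
        field_simp
      have e2 : 2 / Real.pi * (((n : ℝ) - 1 - r) * Real.pi / n) ≤ 2 / Real.pi * (Real.pi - y) := by
        gcongr
      rw [e1] at e2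
      have : (2 / n) * ((min r (n - 1 - r) : ℕ) : ℝ) ≤ 2 / n * ((n : ℝ) - 1 - r) := by gcongr
      linarith
    linarith

lemma norm_geom_trivial (n : ℕ) (ψ : ℝ) :
    ‖∑ j ∈ Finset.range n, Complex.exp ((ψ : ℂ) * Complex.I) ^ j‖ ≤ (n : ℝ) := by
  calc ‖∑ j ∈ Finset.range n, Complex.exp ((ψ : ℂ) * Complex.I) ^ j‖
      ≤ ∑ j ∈ Finset.range n, ‖Complex.exp ((ψ : ℂ) * Complex.I) ^ j‖ := norm_sum_le _ _
    _ = ∑ j ∈ Finset.range n, 1 := by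
        refine Finset.sum_congr rfl fun j _ => ?_
        rw [norm_pow, Complex.norm_exp_ofReal_mul_I, one_pow]
    _ = (n : ℝ) := by simp

lemma norm_geom_le (n : ℕ) (ψ : ℝ) (m : ℕ) (hm : 1 ≤ m) (hn : 0 < n)
    (hsin : (2 / n) * (m : ℝ) ≤ |Real.sin (ψ / 2)|) :
    ‖∑ j ∈ Finset.range n, Complex.exp ((ψ : ℂ) * Complex.I) ^ j‖ ≤ (n : ℝ) / (2 * m) := by
  have hn0 : (0 : ℝ) < n := by positivity
  have hm0 : (0 : ℝ) < m := by positivity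
  set z := Complex.exp ((ψ : ℂ) * Complex.I) with hz
  have hlb : (4 / n) * (m : ℝ) ≤ ‖z - 1‖ := by
    rw [norm_exp_mul_I_sub_one]
    have h4 : (4 / n) * (m : ℝ) = 2 * ((2 / n) * (m : ℝ)) := by ring
    linarith [hsin]
  have hpos : (0 : ℝ) < (4 / n) * (m : ℝ) := by positivity
  have hzne : z ≠ 1 := by
    intro h
    rw [h, sub_self, norm_zero] at hlb
    linarith
  rw [geom_sum_eq hzne, norm_div]
  have hnum : ‖z ^ n - 1‖ ≤ 2 := by
    calc ‖z ^ n - 1‖ ≤ ‖z ^ n‖ + ‖(1 : ℂ)‖ := norm_sub_le _ _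
      _ = 2 := by
          rw [norm_pow, hz, Complex.norm_exp_ofReal_mul_I, one_pow,
            norm_one]
          norm_num
  calc ‖z ^ n - 1‖ / ‖z - 1‖ ≤ 2 / ((4 / n) * (m : ℝ)) :=
        div_le_div₀ (by norm_num) hnum hpos hlb
    _ = (n : ℝ) / (2 * m) := by field_simp; ring

lemma harmonic_sum_le (n : ℕ) (hn : 2 ≤ n) :
    ∑ m ∈ Finset.range n, ((m : ℕ) : ℝ)⁻¹ ≤ 1 + Real.log n := by
  have h1 : ∑ m ∈ Finset.range n, ((m : ℕ) : ℝ)⁻¹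
      = ∑ i ∈ Finset.range (n - 1), ((i + 1 : ℕ) : ℝ)⁻¹ := by
    conv_lhs => rw [show n = (n - 1) + 1 by omega]
    rw [Finset.sum_range_succ']
    simp
  have h2 : ∑ i ∈ Finset.range (n - 1), ((i + 1 : ℕ) : ℝ)⁻¹ = ((harmonic (n - 1) : ℚ) : ℝ) := by
    rw [harmonic]
    push_cast
    rfl
  rw [h1, h2]
  calc ((harmonic (n - 1) : ℚ) : ℝ) ≤ 1 + Real.log (n - 1 : ℕ) := harmonic_le_one_add_log _
    _ ≤ 1 + Real.log n := by
        gcongr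
        · exact_mod_cast (by omega : 0 < n - 1)
        · exact_mod_cast Nat.sub_le n 1

lemma bsum_le (n : ℕ) (hn : 2 ≤ n) :
    ∑ m ∈ Finset.range n,
      (if min m (n - 1 - m) = 0 then (n : ℝ) else (n : ℝ) / (2 * ((min m (n - 1 - m) : ℕ) : ℝ)))
      ≤ (n : ℝ) * (3 + Real.log n) := by
  have hn0 : (0 : ℝ) < n := by positivity
  have hb : ∀ m ∈ Finset.range n,
      (if min m (n - 1 - m) = 0 then (n : ℝ) else (n : ℝ) / (2 * ((min m (n - 1 - m) : ℕ) : ℝ)))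
      ≤ (if m = 0 then (n : ℝ) else 0) + (if m = n - 1 then (n : ℝ) else 0)
        + ((n : ℝ) / 2) * (((m : ℕ) : ℝ)⁻¹ + ((n - 1 - m : ℕ) : ℝ)⁻¹) := by
    intro m hm
    rw [Finset.mem_range] at hm
    by_cases h0 : min m (n - 1 - m) = 0
    · rw [if_pos h0]
      have : m = 0 ∨ m = n - 1 := by omega
      rcases this with h | h
      · rw [if_pos h]
        have : (0:ℝ) ≤ (if m = n - 1 then (n : ℝ) else 0) := by positivity
        have : (0:ℝ) ≤ ((n : ℝ) / 2) * (((m : ℕ) : ℝ)⁻¹ + ((n - 1 - m : ℕ) : ℝ)⁻¹) := by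
          positivity
        linarith
      · rw [if_pos h]
        have : (0:ℝ) ≤ (if m = 0 then (n : ℝ) else 0) := by positivity
        have : (0:ℝ) ≤ ((n : ℝ) / 2) * (((m : ℕ) : ℝ)⁻¹ + ((n - 1 - m : ℕ) : ℝ)⁻¹) := by
          positivity
        linarith
    · rw [if_neg h0]
      have hm1 : 1 ≤ m := by omega
      have hm2 : 1 ≤ n - 1 - m := by omega
      have hi1 : (0:ℝ) ≤ (if m = 0 then (n : ℝ) else 0) := by positivity
      have hi2 : (0:ℝ) ≤ (if m = n - 1 then (n : ℝ) else 0) := by positivity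
      have hkey : (n : ℝ) / (2 * ((min m (n - 1 - m) : ℕ) : ℝ))
          ≤ ((n : ℝ) / 2) * (((m : ℕ) : ℝ)⁻¹ + ((n - 1 - m : ℕ) : ℝ)⁻¹) := by
        have hmpos : (0:ℝ) < ((m:ℕ):ℝ) := by exact_mod_cast hm1
        have hm2pos : (0:ℝ) < ((n - 1 - m : ℕ):ℝ) := by exact_mod_cast hm2
        rw [Nat.cast_min]
        rcases le_total ((m : ℕ) : ℝ) ((n - 1 - m : ℕ) : ℝ) with hle | hle
        · rw [min_eq_left hle]
          have e : (n : ℝ) / (2 * ((m:ℕ):ℝ)) = ((n:ℝ)/2) * ((m:ℕ):ℝ)⁻¹ := by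
            field_simp
          rw [e]
          have hpos : (0:ℝ) ≤ ((n:ℝ)/2) * ((n - 1 - m : ℕ):ℝ)⁻¹ := by positivity
          nlinarith [hpos]
        · rw [min_eq_right hle]
          have e : (n : ℝ) / (2 * ((n - 1 - m:ℕ):ℝ)) = ((n:ℝ)/2) * ((n - 1 - m:ℕ):ℝ)⁻¹ := by
            field_simp
          rw [e]
          have hpos : (0:ℝ) ≤ ((n:ℝ)/2) * ((m : ℕ):ℝ)⁻¹ := by positivity
          nlinarith [hpos]
      linarith
  calc ∑ m ∈ Finset.range n,
      (if min m (n - 1 - m) = 0 then (n : ℝ) else (n : ℝ) / (2 * ((min m (n - 1 - m) : ℕ) : ℝ)))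
      ≤ ∑ m ∈ Finset.range n,
        ((if m = 0 then (n : ℝ) else 0) + (if m = n - 1 then (n : ℝ) else 0)
          + ((n : ℝ) / 2) * (((m : ℕ) : ℝ)⁻¹ + ((n - 1 - m : ℕ) : ℝ)⁻¹)) :=
        Finset.sum_le_sum hb
    _ ≤ (n : ℝ) * (3 + Real.log n) := by
        rw [Finset.sum_add_distrib, Finset.sum_add_distrib]
        have e1 : ∑ m ∈ Finset.range n, (if m = 0 then (n : ℝ) else 0) = n := by
          rw [Finset.sum_ite_eq' (Finset.range n) 0 (fun _ => (n:ℝ))]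
          simp [Finset.mem_range]
          omega
        have e2 : ∑ m ∈ Finset.range n, (if m = n - 1 then (n : ℝ) else 0) = n := by
          rw [Finset.sum_ite_eq' (Finset.range n) (n-1) (fun _ => (n:ℝ))]
          simp [Finset.mem_range]
          omega
        have e3 : ∑ m ∈ Finset.range n, ((n : ℝ) / 2) * (((m : ℕ) : ℝ)⁻¹ + ((n - 1 - m : ℕ) : ℝ)⁻¹)
            ≤ (n:ℝ) * (1 + Real.log n) := by
          rw [← Finset.mul_sum, Finset.sum_add_distrib]
          have refl : ∑ m ∈ Finset.range n, ((n - 1 - m : ℕ) : ℝ)⁻¹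
              = ∑ m ∈ Finset.range n, ((m:ℕ) : ℝ)⁻¹ :=
            Finset.sum_range_reflect (fun m => ((m:ℕ):ℝ)⁻¹) n
          rw [refl]
          have hH := harmonic_sum_le n hn
          have hsum0 : (0:ℝ) ≤ ∑ m ∈ Finset.range n, ((m:ℕ):ℝ)⁻¹ := by positivity
          calc (n:ℝ)/2 * (∑ m ∈ Finset.range n, ((m:ℕ):ℝ)⁻¹ + ∑ m ∈ Finset.range n, ((m:ℕ):ℝ)⁻¹)
              = (n:ℝ) * ∑ m ∈ Finset.range n, ((m:ℕ):ℝ)⁻¹ := by ring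
            _ ≤ (n:ℝ) * (1 + Real.log n) := mul_le_mul_of_nonneg_left hH hn0.le
        rw [e1, e2]
        linarith

lemma kernel_bound (n : ℕ) (hn : 2 ≤ n) (t : ℝ) :
    ∑ ℓ ∈ Finset.range n,
      ‖∑ j ∈ Finset.range n,
        Complex.exp (((t - 2 * Real.pi * ℓ / n : ℝ) : ℂ) * Complex.I) ^ j‖
      ≤ (n : ℝ) * (3 + Real.log n) := by
  have hπ := Real.pi_pos
  have hn0 : (0 : ℝ) < n := by positivity
  set K : ℤ := ⌊t * n / (2 * Real.pi)⌋ with hK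
  set s : ℝ := t / 2 - K * Real.pi / n with hs
  have hsplit : t / 2 = (t * n / (2 * Real.pi)) * Real.pi / n := by
    field_simp
  have hfl1 : (K : ℝ) ≤ t * n / (2 * Real.pi) := Int.floor_le _
  have hfl2 : t * n / (2 * Real.pi) < K + 1 := Int.lt_floor_add_one _
  have hs0 : 0 ≤ s := by
    rw [hs, hsplit]
    have : (K : ℝ) * Real.pi / n ≤ (t * n / (2 * Real.pi)) * Real.pi / n := by gcongr
    linarith
  have hs1 : s < Real.pi / n := by
    rw [hs, hsplit]
    have : (t * n / (2 * Real.pi)) * Real.pi / n < ((K : ℝ) + 1) * Real.pi / n := by gcongr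
    have e : ((K : ℝ) + 1) * Real.pi / n = K * Real.pi / n + Real.pi / n := by ring
    linarith [e ▸ this]
  set r : ℕ → ℕ := fun ℓ => ((K - ℓ) % n).toNat with hrdef
  have hmod : ∀ ℓ : ℕ, 0 ≤ (K - ℓ) % (n : ℤ) ∧ (K - ℓ) % (n : ℤ) < n := by
    intro ℓ
    constructor
    · exact Int.emod_nonneg _ (by exact_mod_cast (by omega : n ≠ 0))
    · exact_mod_cast Int.emod_lt_of_pos _ (by exact_mod_cast (by omega : 0 < n))
  have hrlt : ∀ ℓ : ℕ, r ℓ < n := by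
    intro ℓ
    have := hmod ℓ
    simp only [hrdef]
    omega
  -- the sine lower bound for each ℓ
  have hsin : ∀ ℓ : ℕ, ℓ < n →
      (2 / n) * ((min (r ℓ) (n - 1 - r ℓ) : ℕ) : ℝ) ≤ |Real.sin ((t - 2 * Real.pi * ℓ / n) / 2)| := by
    intro ℓ hℓ
    set q : ℤ := (K - ℓ) / n with hq
    have hdm := Int.mul_ediv_add_emod (K - ℓ) n
    have hrq : (K : ℤ) - ℓ = n * q + (r ℓ : ℤ) := by
      have := (hmod ℓ).1
      simp only [hrdef, hq]
      omega
    have hx : (t - 2 * Real.pi * ℓ / n) / 2 = (s + (r ℓ) * Real.pi / n) + q * Real.pi := by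
      have hrq' : (K : ℝ) - (ℓ : ℝ) = (n : ℝ) * (q : ℝ) + ((r ℓ : ℕ) : ℝ) := by
        exact_mod_cast hrq
      rw [hs]
      field_simp
      linear_combination (2 * Real.pi) * hrq'
    rw [hx, Real.sin_add_int_mul_pi, abs_mul]
    have habs1 : |((-1 : ℝ) ^ q)| = 1 := by
      have h : ((-1 : ℝ) ^ q) * ((-1 : ℝ) ^ q) = 1 := by
        rw [← zpow_add₀ (by norm_num : (-1:ℝ) ≠ 0), ← two_mul, zpow_mul]
        norm_num
      rcases mul_self_eq_one_iff.mp h with h | h <;> rw [h] <;> norm_num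
    rw [habs1, one_mul]
    have := sin_lower n hn s hs0 hs1 (r ℓ) (hrlt ℓ)
    calc (2 / n) * ((min (r ℓ) (n - 1 - r ℓ) : ℕ) : ℝ)
        ≤ Real.sin (s + (r ℓ) * Real.pi / n) := this
      _ ≤ |Real.sin (s + (r ℓ) * Real.pi / n)| := le_abs_self _
  -- per-ℓ bound by b (r ℓ)
  set b : ℕ → ℝ := fun m =>
    if min m (n - 1 - m) = 0 then (n : ℝ) else (n : ℝ) / (2 * ((min m (n - 1 - m) : ℕ) : ℝ))
    with hbdef
  have hG : ∀ ℓ ∈ Finset.range n,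
      ‖∑ j ∈ Finset.range n,
        Complex.exp (((t - 2 * Real.pi * ℓ / n : ℝ) : ℂ) * Complex.I) ^ j‖ ≤ b (r ℓ) := by
    intro ℓ hℓ
    rw [Finset.mem_range] at hℓ
    by_cases h0 : min (r ℓ) (n - 1 - r ℓ) = 0
    · simp only [hbdef, if_pos h0]
      exact norm_geom_trivial n _
    · simp only [hbdef, if_neg h0]
      exact norm_geom_le n _ _ (by omega) (by omega) (hsin ℓ hℓ)
  calc ∑ ℓ ∈ Finset.range n,
      ‖∑ j ∈ Finset.range n,
        Complex.exp (((t - 2 * Real.pi * ℓ / n : ℝ) : ℂ) * Complex.I) ^ j‖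
      ≤ ∑ ℓ ∈ Finset.range n, b (r ℓ) := Finset.sum_le_sum hG
    _ = ∑ m ∈ Finset.range n, b m := by
        refine Finset.sum_nbij' r (fun m => ((K - m) % n).toNat) ?_ ?_ ?_ ?_ ?_
        · intro ℓ _
          exact Finset.mem_range.mpr (hrlt ℓ)
        · intro m hm
          rw [Finset.mem_range] at hm ⊢
          have := hmod m
          omega
        · intro ℓ hℓ
          rw [Finset.mem_range] at hℓ
          simp only [hrdef]
          have h1 : (((K - ℓ) % n).toNat : ℤ) = (K - ℓ) % n := Int.toNat_of_nonneg (hmod ℓ).1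
          have : (K - (((K - ℓ) % n).toNat : ℤ)) % n = ℓ := by
            rw [h1]
            exact emod_inv_aux K n ℓ hℓ
          omega
        · intro m hm
          rw [Finset.mem_range] at hm
          simp only [hrdef]
          have h1 : (((K - m) % n).toNat : ℤ) = (K - m) % n := Int.toNat_of_nonneg (hmod m).1
          have : (K - (((K - m) % n).toNat : ℤ)) % n = m := by
            rw [h1]
            exact emod_inv_aux K n m hm
          omega
        · intro ℓ _
          rfl
    _ ≤ (n : ℝ) * (3 + Real.log n) := bsum_le n hn

/-- **Uniform operator norm of the rational interpolation operator.**
Fix `β > 0`. There is a constant `C` such that for every `n > 1` and every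
continuous `f : ℝ → ℂ` with `f(x) → 0` as `|x| → ∞` (with associated periodic
function `F`), `sup_x |R_n f(x)| ≤ C (log n) sup_x |f(x)|`. -/
theorem ratInterp_uniform_norm (β : ℝ) (hβ : 0 < β) :
    ∃ C : ℝ, 0 < C ∧ ∀ n : ℕ, 1 < n → ∀ f F : ℝ → ℂ,
      Continuous f →
      Filter.Tendsto f (Filter.cocompact ℝ) (nhds 0) →
      Function.Periodic F (2 * Real.pi) →
      (∀ θ ∈ Set.Ioo (0 : ℝ) (2 * Real.pi), F θ = f (Tmap β θ)) →
      F 0 = 0 →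
      (⨆ x : ℝ, ‖ratInterp β n F x‖) ≤ C * Real.log n * ⨆ x : ℝ, ‖f x‖ := by
  refine ⟨6, by norm_num, ?_⟩
  intro n hn f F hf hf0 hFper hFf hF0
  have hn2 : 2 ≤ n := hn
  have hπ := Real.pi_pos
  have hn0 : (0 : ℝ) < n := by exact_mod_cast (by omega : 0 < n)
  set S : ℝ := ⨆ x : ℝ, ‖f x‖ with hSdef
  -- the sup of ‖f‖ is a genuine bound
  have hbdd : BddAbove (Set.range fun x : ℝ => ‖f x‖) := by
    have h1 : Filter.Tendsto (fun x : ℝ => ‖f x‖) (Filter.cocompact ℝ) (nhds 0) := by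
      have := hf0.norm
      simpa using this
    have h2 : ∀ᶠ x in Filter.cocompact ℝ, ‖f x‖ < 1 :=
      h1.eventually_lt_const (by norm_num)
    obtain ⟨K, hK, hKsub⟩ := Filter.hasBasis_cocompact.eventually_iff.mp h2
    obtain ⟨M, hM⟩ := (hK.image hf.norm).bddAbove
    refine ⟨max M 1, ?_⟩
    rintro y ⟨x, rfl⟩
    by_cases hx : x ∈ K
    · exact le_max_of_le_left (hM (Set.mem_image_of_mem _ hx))
    · exact le_max_of_le_right (hKsub hx).le
  have hfS : ∀ y : ℝ, ‖f y‖ ≤ S := fun y => le_ciSup hbdd y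
  have hS0 : 0 ≤ S := le_trans (norm_nonneg (f 0)) (hfS 0)
  -- pointwise bound
  have hpt : ∀ x : ℝ, ‖ratInterp β n F x‖ ≤ (3 + Real.log n) * S := by
    intro x
    rw [ratInterp_eq β hβ n F x]
    set t := (Mob β x).arg with ht
    rw [norm_mul]
    have hninv : ‖((n : ℂ))⁻¹‖ = (n : ℝ)⁻¹ := by
      rw [norm_inv, Complex.norm_natCast]
    rw [hninv]
    have hterm : ∀ ℓ ∈ Finset.range n,
        ‖F (2 * Real.pi * ℓ / n) *
          (Hker n (t - 2 * Real.pi * ℓ / n) - Hker n (-(2 * Real.pi * ℓ / n)))‖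
        ≤ S * ‖∑ j ∈ Finset.range n,
            Complex.exp (((t - 2 * Real.pi * ℓ / n : ℝ) : ℂ) * Complex.I) ^ j‖ := by
      intro ℓ hℓ
      rw [Finset.mem_range] at hℓ
      rcases Nat.eq_zero_or_pos ℓ with h0 | hpos
      · have harg : 2 * Real.pi * (ℓ : ℝ) / n = 0 := by rw [h0]; simp
        rw [harg, hF0, zero_mul, norm_zero]
        positivity
      · have hθ : (2 * Real.pi * ℓ / n : ℝ) ∈ Set.Ioo (0 : ℝ) (2 * Real.pi) := by
          constructor
          · have : (0 : ℝ) < (ℓ : ℝ) := by exact_mod_cast hpos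
            positivity
          · rw [div_lt_iff₀ hn0]
            have hl : (ℓ : ℝ) < n := by exact_mod_cast hℓ
            nlinarith
        have hzero : Hker n (-(2 * Real.pi * ℓ / n)) = 0 :=
          hker_theta_zero n (by omega) ℓ hpos hℓ
        rw [hzero, sub_zero, norm_mul, hFf _ hθ, norm_hker n (by omega)]
        exact mul_le_mul_of_nonneg_right (hfS _) (norm_nonneg _)
    calc (n : ℝ)⁻¹ * ‖∑ ℓ ∈ Finset.range n,
          F (2 * Real.pi * ℓ / n) *
            (Hker n (t - 2 * Real.pi * ℓ / n) - Hker n (-(2 * Real.pi * ℓ / n)))‖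
        ≤ (n : ℝ)⁻¹ * ∑ ℓ ∈ Finset.range n,
            ‖F (2 * Real.pi * ℓ / n) *
              (Hker n (t - 2 * Real.pi * ℓ / n) - Hker n (-(2 * Real.pi * ℓ / n)))‖ := by
          gcongr
          exact norm_sum_le _ _
      _ ≤ (n : ℝ)⁻¹ * ∑ ℓ ∈ Finset.range n,
            S * ‖∑ j ∈ Finset.range n,
              Complex.exp (((t - 2 * Real.pi * ℓ / n : ℝ) : ℂ) * Complex.I) ^ j‖ := by
          gcongr with ℓ hℓ
          · exact hterm ℓ hℓ
      _ = (n : ℝ)⁻¹ * (S * ∑ ℓ ∈ Finset.range n,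
            ‖∑ j ∈ Finset.range n,
              Complex.exp (((t - 2 * Real.pi * ℓ / n : ℝ) : ℂ) * Complex.I) ^ j‖) := by
          rw [← Finset.mul_sum]
      _ ≤ (n : ℝ)⁻¹ * (S * ((n : ℝ) * (3 + Real.log n))) := by
          gcongr
          exact kernel_bound n hn2 t
      _ = (3 + Real.log n) * S := by
          field_simp
  -- conclude
  have h2n : (2 : ℝ) ≤ n := by exact_mod_cast hn2
  have hlog : Real.log 2 ≤ Real.log n := Real.log_le_log (by norm_num) h2n
  have hlog2 : (0.6931471803 : ℝ) < Real.log 2 := Real.log_two_gt_d9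
  have h36 : 3 + Real.log n ≤ 6 * Real.log n := by linarith
  refine ciSup_le fun x => ?_
  calc ‖ratInterp β n F x‖ ≤ (3 + Real.log n) * S := hpt x
    _ ≤ 6 * Real.log n * S := mul_le_mul_of_nonneg_right h36 hS0
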